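/- Let K and M be closed subspaces of a complex Hilbert space E and let C := com(K, M). Then the orthogonal projections onto K ⊓ C and onto M ⊓ C commute: P_{K ⊓ C} ∘ P_{M ⊓ C} = P_{M ⊓ C} ∘ P_{K ⊓ C}. -/

import Mathlib

variable {E : Type*} [NormedAddCommGroup E] [InnerProductSpace ℂ E] [CompleteSpace E]

/-- Orthogonal projection onto (the topological closure of) a submodule, as a
continuous linear operator on `E`. For a closed subspace `K` this is the
orthogonal projection `P_K` onto `K` itself. -/
noncomputable def proj (K : Submodule ℂ E) : E →L[ℂ] E :=
  K.topologicalClosure.subtypeL.comp (Submodule.orthogonalProjectionOnto K.topologicalClosure)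


/-- The commutator `com(K, M)` of two subspaces. -/
noncomputable def com (K M : Submodule ℂ E) : Submodule ℂ E :=
  (K ⊓ M) ⊔ (K ⊓ Mᗮ) ⊔ (Kᗮ ⊓ M) ⊔ (Kᗮ ⊓ Mᗮ)

private lemma closure_orth (S : Submodule ℂ E) : (S.topologicalClosure)ᗮ = Sᗮ := by
  rw [← Submodule.orthogonal_orthogonal_eq_closure, Submodule.triorthogonal_eq_orthogonal]

private lemma proj_mem (S : Submodule ℂ E) (x : E) : proj S x ∈ S.topologicalClosure :=
  Submodule.coe_mem (Submodule.orthogonalProjectionOnto S.topologicalClosure x)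

private lemma sub_proj_mem (S : Submodule ℂ E) (x : E) : x - proj S x ∈ Sᗮ := by
  rw [← closure_orth]
  exact Submodule.sub_starProjection_mem_orthogonal (K := S.topologicalClosure) x

private lemma proj_comp_eq_zero {A B : Submodule ℂ E} (h : B ≤ Aᗮ) :
    proj A ∘L proj B = 0 := by
  ext x
  have hmem : proj B x ∈ (A.topologicalClosure)ᗮ := by
    rw [closure_orth]
    exact B.topologicalClosure_minimal h A.isClosed_orthogonal (proj_mem B x)
  simp only [ContinuousLinearMap.comp_apply, ContinuousLinearMap.zero_apply, proj,
    Submodule.subtypeL_apply, ContinuousLinearMap.coe_comp', Function.comp_apply]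
  exact Submodule.eq_starProjection_of_mem_orthogonal (zero_mem _) (by simpa [proj] using hmem)

private lemma proj_comp_self (A : Submodule ℂ E) : proj A ∘L proj A = proj A := by
  ext x
  simp only [ContinuousLinearMap.comp_apply, proj, Submodule.subtypeL_apply]
  exact Submodule.eq_starProjection_of_mem_orthogonal (Submodule.coe_mem _) (by simp)

private lemma proj_sup {A B : Submodule ℂ E} (h : B ≤ Aᗮ) :
    proj (A ⊔ B) = proj A + proj B := by
  have hAB : A ≤ Bᗮ := fun a ha b hb =>
    inner_eq_zero_symm.mp (h hb a ha)
  ext x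
  have hmem : proj A x + proj B x ∈ (A ⊔ B).topologicalClosure :=
    Submodule.add_mem _
      (Submodule.topologicalClosure_mono le_sup_left (proj_mem A x))
      (Submodule.topologicalClosure_mono le_sup_right (proj_mem B x))
  have horth : x - (proj A x + proj B x) ∈ ((A ⊔ B).topologicalClosure)ᗮ := by
    rw [closure_orth, ← Submodule.inf_orthogonal]
    constructor
    · have h1 : x - proj A x ∈ Aᗮ := sub_proj_mem A x
      have h2 : proj B x ∈ Aᗮ :=
        B.topologicalClosure_minimal h A.isClosed_orthogonal (proj_mem B x)
      have : x - (proj A x + proj B x) = (x - proj A x) - proj B x := by abel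
      rw [this]; exact sub_mem h1 h2
    · have h1 : x - proj B x ∈ Bᗮ := sub_proj_mem B x
      have h2 : proj A x ∈ Bᗮ :=
        A.topologicalClosure_minimal hAB B.isClosed_orthogonal (proj_mem A x)
      have : x - (proj A x + proj B x) = (x - proj B x) - proj A x := by abel
      rw [this]; exact sub_mem h1 h2
  show (Submodule.orthogonalProjectionOnto ((A ⊔ B).topologicalClosure) x : E) = proj A x + proj B x
  exact Submodule.eq_starProjection_of_mem_orthogonal hmem horth

private lemma inf_com_left (K M : Submodule ℂ E) :
    K ⊓ com K M = (K ⊓ M) ⊔ (K ⊓ Mᗮ) := by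
  apply le_antisymm
  · rintro x ⟨hxK, hxC⟩
    obtain ⟨p, hp, d, hd, rfl⟩ := Submodule.mem_sup.mp hxC
    obtain ⟨q, hq, c, hc, rfl⟩ := Submodule.mem_sup.mp hp
    have hqK : q ∈ K := sup_le (inf_le_left : K ⊓ M ≤ K) inf_le_left hq
    have hcdK : c + d ∈ K := by
      have : c + d = (q + c + d) - q := by abel
      rw [this]; exact sub_mem hxK hqK
    have hcd : c + d ∈ Kᗮ := add_mem hc.1 hd.1
    have h0 : c + d = 0 := (Submodule.disjoint_def.mp K.orthogonal_disjoint) _ hcdK hcd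
    show q + c + d ∈ _
    rw [add_assoc, h0, add_zero]
    exact hq
  · exact sup_le
      (le_inf inf_le_left (le_sup_of_le_left (le_sup_of_le_left le_sup_left)))
      (le_inf inf_le_left (le_sup_of_le_left (le_sup_of_le_left le_sup_right)))

private lemma inf_com_right (K M : Submodule ℂ E) :
    M ⊓ com K M = (K ⊓ M) ⊔ (Kᗮ ⊓ M) := by
  apply le_antisymm
  · rintro x ⟨hxM, hxC⟩
    obtain ⟨p, hp, d, hd, rfl⟩ := Submodule.mem_sup.mp hxC
    obtain ⟨q, hq, c, hc, rfl⟩ := Submodule.mem_sup.mp hp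
    obtain ⟨a, ha, b, hb, rfl⟩ := Submodule.mem_sup.mp hq
    have hacM : a + c ∈ M := add_mem ha.2 hc.2
    have hbdM : b + d ∈ M := by
      have : b + d = (a + b + c + d) - (a + c) := by abel
      rw [this]; exact sub_mem hxM hacM
    have hbd : b + d ∈ Mᗮ := add_mem hb.2 hd.2
    have h0 : b + d = 0 := (Submodule.disjoint_def.mp M.orthogonal_disjoint) _ hbdM hbd
    show a + b + c + d ∈ _
    have : a + b + c + d = (a + c) + (b + d) := by abel
    rw [this, h0, add_zero]
    exact Submodule.add_mem_sup ha hc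
  · exact sup_le
      (le_inf inf_le_right (le_sup_of_le_left (le_sup_of_le_left le_sup_left)))
      (le_inf inf_le_right (le_sup_of_le_left le_sup_right))

theorem stmt3 (K M : Submodule ℂ E) (hK : IsClosed (K : Set E)) (hM : IsClosed (M : Set E)) :
    proj (K ⊓ com K M) ∘L proj (M ⊓ com K M) = proj (M ⊓ com K M) ∘L proj (K ⊓ com K M) := by
  have o1 : K ⊓ Mᗮ ≤ (K ⊓ M)ᗮ :=
    inf_le_right.trans (Submodule.orthogonal_le inf_le_right)
  have o2 : Kᗮ ⊓ M ≤ (K ⊓ M)ᗮ :=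
    inf_le_left.trans (Submodule.orthogonal_le inf_le_left)
  have o3 : K ⊓ M ≤ (K ⊓ Mᗮ)ᗮ :=
    inf_le_right.trans ((Submodule.le_orthogonal_orthogonal M).trans
      (Submodule.orthogonal_le inf_le_right))
  have o4 : Kᗮ ⊓ M ≤ (K ⊓ Mᗮ)ᗮ :=
    inf_le_left.trans (Submodule.orthogonal_le inf_le_left)
  have o5 : K ⊓ M ≤ (Kᗮ ⊓ M)ᗮ :=
    inf_le_left.trans ((Submodule.le_orthogonal_orthogonal K).trans
      (Submodule.orthogonal_le inf_le_left))
  have o6 : K ⊓ Mᗮ ≤ (Kᗮ ⊓ M)ᗮ :=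
    inf_le_right.trans (Submodule.orthogonal_le inf_le_right)
  rw [inf_com_left, inf_com_right, proj_sup o1, proj_sup o2,
    ContinuousLinearMap.add_comp, ContinuousLinearMap.add_comp,
    ContinuousLinearMap.comp_add, ContinuousLinearMap.comp_add,
    ContinuousLinearMap.comp_add, ContinuousLinearMap.comp_add,
    proj_comp_self, proj_comp_eq_zero o2, proj_comp_eq_zero o1,
    proj_comp_eq_zero o3, proj_comp_eq_zero o4, proj_comp_eq_zero o5, proj_comp_eq_zero o6]
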